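/- Suppose the weights x_v ∈ [0,1] satisfy the LP constraint that every interesting path has total non-final weight at least 1. For t ∈ [0,1], let S_t = { v ∈ V : ∃ i ∈ {1,…,L}, f_i(v) ≤ t ≤ f_i(v) + x_v }. Then for every t ∈ [0,1], S_t is a feasible solution to the bootstrap problem. -/

import Mathlib

open scoped ENNReal

/-- Colors of vertices in the circuit DAG. -/
inductive Color where
  | white | blue | red
deriving DecidableEq

variable {V : Type*}

/-- Number of red vertices on a path (given as a list of vertices). -/
def redCount (color : V → Color) (p : List V) : ℕ :=
  (p.filter (fun v => decide (color v = Color.red))).length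

/-- Length of a path: the sum of the weights of its non-final vertices. -/
noncomputable def plen (x : V → ℝ≥0∞) (p : List V) : ℝ≥0∞ :=
  (p.dropLast.map x).sum

/-- `p` is a `(v,i)`-interesting path: it starts at a red vertex, ends at `v`, and
traverses exactly `i` red vertices. -/
def VIPath (E : V → V → Prop) (color : V → Color) (v : V) (i : ℕ) (p : List V) : Prop :=
  ∃ hp : p ≠ [], p.Chain' E ∧ color (p.head hp) = Color.red ∧
    p.getLast hp = v ∧ redCount color p = i

/-- `p` is an interesting path: it starts and ends at red vertices and traverses exactly
`L+1` red vertices. -/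
def IntPath (E : V → V → Prop) (color : V → Color) (L : ℕ) (p : List V) : Prop :=
  ∃ hp : p ≠ [], p.Chain' E ∧ color (p.head hp) = Color.red ∧
    color (p.getLast hp) = Color.red ∧ redCount color p = L + 1

/-- `f_i(v)`: the minimum length of a `(v,i)`-interesting path (`∞` if none exists). -/
noncomputable def fval (E : V → V → Prop) (color : V → Color) (x : V → ℝ≥0∞)
    (v : V) (i : ℕ) : ℝ≥0∞ :=
  sInf (plen x '' {p : List V | VIPath E color v i p})

/-- `δ(u,w)`: the minimum of `x_u + x_{v₂} + ⋯ + x_{v_{k−1}}` over paths `u v₂ … v_{k−1} w`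
whose internal vertices `v₂,…,v_{k−1}` are all blue (`∞` if none exists). -/
noncomputable def deltaW (E : V → V → Prop) (color : V → Color) (x : V → ℝ≥0∞)
    (u w : V) : ℝ≥0∞ :=
  sInf (plen x '' {p : List V | ∃ hp : p ≠ [], p.Chain' E ∧ p.head hp = u ∧
    p.getLast hp = w ∧ 2 ≤ p.length ∧ ∀ z ∈ (p.drop 1).dropLast, color z = Color.blue})


lemma redCount_concat (color : V → Color) (q : List V) (w : V) :
    redCount color (q ++ [w]) =
      redCount color q + (if color w = Color.red then 1 else 0) := by
  by_cases h : color w = Color.red <;> simp [redCount, List.filter_append, h]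

lemma plen_concat (x : V → ℝ≥0∞) (q : List V) (hq : q ≠ []) (w : V) :
    plen x (q ++ [w]) = plen x q + x (q.getLast hq) := by
  unfold plen
  rw [List.dropLast_concat]
  conv_lhs => rw [← List.dropLast_append_getLast hq]
  simp

lemma one_le_redCount (color : V → Color) (q : List V) (hq : q ≠ [])
    (h : color (q.head hq) = Color.red) : 1 ≤ redCount color q := by
  have : q.head hq ∈ q.filter (fun v => decide (color v = Color.red)) :=
    List.mem_filter.mpr ⟨List.head_mem hq, by simp [h]⟩
  exact List.length_pos_iff.mpr (List.ne_nil_of_mem this)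

lemma redCount_dropLast_le (color : V → Color) (q : List V) :
    redCount color q.dropLast ≤ redCount color q :=
  ((q.dropLast_sublist).filter _).length_le

lemma fval_red_zero (E : V → V → Prop) (color : V → Color) (x : V → ℝ≥0∞)
    (v : V) (hv : color v = Color.red) : fval E color x v 1 ≤ 0 := by
  refine sInf_le ⟨[v], ⟨by simp, ?_⟩, by simp [plen]⟩
  exact ⟨List.isChain_singleton _, by simp [hv], by simp, by simp [redCount, hv]⟩

lemma fval_concat (E : V → V → Prop) (color : V → Color) (x : V → ℝ≥0∞)
    (u w : V) (i : ℕ) (hE : E u w) :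
    fval E color x w (i + (if color w = Color.red then 1 else 0)) ≤
      fval E color x u i + x u := by
  simp only [fval]
  rw [ENNReal.sInf_add]
  refine le_iInf₂ fun b hb => ?_
  obtain ⟨q, hq, rfl⟩ := hb
  obtain ⟨hne, hch, hhd, hlast, hred⟩ := hq
  refine sInf_le ⟨q ++ [w], ⟨by simp, ?_, ?_, ?_, ?_⟩, ?_⟩
  · refine List.isChain_append.mpr ?_
    refine ⟨hch, by simp, fun a ha y hy => ?_⟩
    rw [List.getLast?_eq_getLast hne] at ha
    simp at ha hy
    rw [← ha, ← hy, hlast]; exact hE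
  · rw [List.head_append_of_ne_nil hne]; exact hhd
  · exact List.getLast_concat
  · rw [redCount_concat, hred]
  · rw [plen_concat x q hne w, hlast]

lemma key_lemma (E : V → V → Prop) (color : V → Color) (L : ℕ) (x : V → ℝ≥0∞)
    (t : ℝ≥0∞) :
    ∀ p : List V, ∀ hp : p ≠ [], p.Chain' E → color (p.head hp) = Color.red →
      redCount color p.dropLast ≤ L →
      (∀ u ∈ p.dropLast, ¬ ∃ i : ℕ, 1 ≤ i ∧ i ≤ L ∧
        fval E color x u i ≤ t ∧ t ≤ fval E color x u i + x u) →
      fval E color x (p.getLast hp) (redCount color p) ≤ t ∧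
        (2 ≤ p.length → fval E color x (p.getLast hp) (redCount color p) < t) := by
  intro p
  induction p using List.reverseRecOn with
  | nil => intro hp; exact absurd rfl hp
  | append_singleton q w ih =>
    intro hp hch hhd hdrop hS
    rcases eq_or_ne q [] with rfl | hq
    · simp only [List.nil_append] at hhd ⊢
      refine ⟨?_, by intro h2; simp at h2⟩
      have := fval_red_zero E color x w hhd
      simp only [List.head_cons] at hhd
      simpa [redCount, hhd] using this.trans zero_le
    · have hdl : (q ++ [w]).dropLast = q := List.dropLast_concat
      rw [hdl] at hdrop hS
      have hchq : q.Chain' E := (List.isChain_append.mp hch).1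
      have hE : E (q.getLast hq) w := by
        refine (List.isChain_append.mp hch).2.2 _ ?_ w (by simp)
        rw [List.getLast?_eq_getLast hq]; simp
      have hhdq : color (q.head hq) = Color.red := by
        rwa [List.head_append_of_ne_nil hq] at hhd
      have ihq := ih hq hchq hhdq ((redCount_dropLast_le color q).trans hdrop)
        (fun u hu => hS u (List.mem_of_mem_dropLast hu))
      have hu_mem : q.getLast hq ∈ q := List.getLast_mem hq
      have h1 : 1 ≤ redCount color q := one_le_redCount color q hq hhdq
      have hnot := hS (q.getLast hq) hu_mem
      have hlt : fval E color x (q.getLast hq) (redCount color q)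
          + x (q.getLast hq) < t := by
        by_contra hge
        exact hnot ⟨redCount color q, h1, hdrop, ihq.1, not_lt.mp hge⟩
      have hext := fval_concat E color x (q.getLast hq) w (redCount color q) hE
      have hfin : fval E color x w (redCount color (q ++ [w])) < t := by
        rw [redCount_concat]
        exact lt_of_le_of_lt hext hlt
      have hlast : (q ++ [w]).getLast hp = w := List.getLast_concat
      rw [hlast]
      exact ⟨hfin.le, fun _ => hfin⟩
/-- if the weights satisfy the LP constraint, then for every `t ∈ [0,1]` the
rounded set `S_t = {v : ∃ i ∈ {1,…,L}, f_i(v) ≤ t ≤ f_i(v) + x_v}` is a feasible bootstrap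
solution, i.e. every interesting path has a non-final vertex in `S_t`. -/
theorem stmt6 (E : V → V → Prop) (color : V → Color) (L : ℕ) (hL : 1 ≤ L)
    (x : V → ℝ≥0∞) (hx : ∀ v, x v ≤ 1)
    (hLP : ∀ q : List V, IntPath E color L q → 1 ≤ plen x q)
    (t : ℝ≥0∞) (ht : t ≤ 1) :
    ∀ p : List V, IntPath E color L p →
      ∃ u ∈ p.dropLast,
        u ∈ {v : V | ∃ i : ℕ, 1 ≤ i ∧ i ≤ L ∧
              fval E color x v i ≤ t ∧ t ≤ fval E color x v i + x v} := by
  intro p hint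
  by_contra hcon
  obtain ⟨hp, hch, hhd, hlst, hred⟩ := hint
  have hS : ∀ u ∈ p.dropLast, ¬ ∃ i : ℕ, 1 ≤ i ∧ i ≤ L ∧
      fval E color x u i ≤ t ∧ t ≤ fval E color x u i + x u :=
    fun u hu hex => hcon ⟨u, hu, hex⟩
  have hsplit : redCount color p = redCount color p.dropLast + 1 := by
    conv_lhs => rw [← List.dropLast_append_getLast hp]
    rw [redCount_concat, if_pos hlst]
  have hdrop : redCount color p.dropLast ≤ L := by omega
  have hlen : 2 ≤ p.length := by
    have h1 : redCount color p ≤ p.length := List.length_filter_le _ p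
    omega
  have hkey := (key_lemma E color L x t p hp hch hhd hdrop hS).2 hlen
  rw [hred] at hkey
  have hge : (1 : ℝ≥0∞) ≤ fval E color x (p.getLast hp) (L + 1) := by
    refine le_sInf fun b hb => ?_
    obtain ⟨q, hq, rfl⟩ := hb
    obtain ⟨hne, hchq, hhdq, hlastq, hredq⟩ := hq
    exact hLP q ⟨hne, hchq, hhdq, by rw [hlastq]; exact hlst, hredq⟩
  exact absurd (lt_of_le_of_lt hge (hkey.trans_le ht)) (lt_irrefl 1)
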